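/- Let L be a sublattice of the Boolean lattice on [n] containing ∅ and [n], and define G(L) to be the bipartite graph on {x_1,...,x_n} ∪ {y_1,...,y_n} whose minimal vertex covers are exactly {x_i : i ∈ S} ∪ {y_j : j ∉ S} for S ∈ L. Then G(L) is Cohen–Macaulay if and only if L is a full sublattice (rank of L equals n), using the characterization that Cohen–Macaulay bipartite graphs are exactly the graphs G_P for finite posets P. -/

import Mathlib

open Finset

/-- `C` is a vertex cover of the graph `G`. -/
def IsVC {α : Type*} (G : SimpleGraph α) (C : Finset α) : Prop :=
  ∀ ⦃u v : α⦄, G.Adj u v → u ∈ C ∨ v ∈ C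

/-- `C` is a minimal vertex cover of the graph `G`. -/
def IsMinVC {α : Type*} (G : SimpleGraph α) (C : Finset α) : Prop :=
  IsVC G C ∧ ∀ C' ⊂ C, ¬ IsVC G C'

/-- `G` is unmixed: all minimal vertex covers have the same cardinality. -/
def Unmixed {α : Type*} (G : SimpleGraph α) : Prop :=
  ∀ C C' : Finset α, IsMinVC G C → IsMinVC G C' → C.card = C'.card

/-- `G` is bipartite with respect to the given sum decomposition of its vertex set:
all edges go between the two parts. -/
def Bip {m n : ℕ} (G : SimpleGraph (Fin m ⊕ Fin n)) : Prop :=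
  (∀ i j, ¬ G.Adj (Sum.inl i) (Sum.inl j)) ∧ ∀ i j, ¬ G.Adj (Sum.inr i) (Sum.inr j)

/-- the set `{x_i : i ∈ S} ∪ {y_j : j ∉ S}`, where `x_i = Sum.inl i`, `y_j = Sum.inr j`. -/
def coverOf {n : ℕ} (S : Finset (Fin n)) : Finset (Fin n ⊕ Fin n) :=
  S.image Sum.inl ∪ Sᶜ.image Sum.inr

/-- the "x-part" `C̄ = {i : x_i ∈ C}` of a set of vertices `C`. -/
def xpart {n : ℕ} (C : Finset (Fin n ⊕ Fin n)) : Finset (Fin n) :=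
  Finset.univ.filter fun i => Sum.inl i ∈ C

/-- the bipartite graph `G_P` of a poset: edges `{x_i, y_j}` whenever `p_i ≤ p_j`. -/
def posetGraph (P : Type*) [PartialOrder P] : SimpleGraph (P ⊕ P) where
  Adj u v := (∃ i j, i ≤ j ∧ u = Sum.inl i ∧ v = Sum.inr j) ∨
    (∃ i j, i ≤ j ∧ u = Sum.inr j ∧ v = Sum.inl i)
  symm := by
    constructor
    rintro u v (⟨i, j, h, rfl, rfl⟩ | ⟨i, j, h, rfl, rfl⟩)
    · exact Or.inr ⟨i, j, h, rfl, rfl⟩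
    · exact Or.inl ⟨i, j, h, rfl, rfl⟩
  loopless := by
    constructor
    rintro u (⟨i, j, h, rfl, heq⟩ | ⟨i, j, h, rfl, heq⟩) <;> simp at heq

/-- `α` is an order ideal (poset ideal, downward closed subset) of `P`. -/
def IsOrderIdeal {P : Type*} [PartialOrder P] (α : Finset P) : Prop :=
  ∀ a ∈ α, ∀ b, b ≤ a → b ∈ α

/-- the set `α_x ∪ α_y = {x_i : p_i ∈ α} ∪ {y_j : p_j ∉ α}` -/
def idealCover {P : Type*} [PartialOrder P] [Fintype P] [DecidableEq P]
    (α : Finset P) : Finset (P ⊕ P) :=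
  α.image Sum.inl ∪ αᶜ.image Sum.inr

@[simp] lemma mem_coverOf_inl {n : ℕ} {S : Finset (Fin n)} {a : Fin n} :
    Sum.inl a ∈ coverOf S ↔ a ∈ S := by simp [coverOf]

@[simp] lemma mem_coverOf_inr {n : ℕ} {S : Finset (Fin n)} {b : Fin n} :
    Sum.inr b ∈ coverOf S ↔ b ∉ S := by simp [coverOf]

lemma coverOf_inj {n : ℕ} {S T : Finset (Fin n)} (h : coverOf S = coverOf T) : S = T := by
  ext a
  rw [← mem_coverOf_inl (S := S), ← mem_coverOf_inl (S := T), h]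

lemma exists_minVC {α : Type*} [DecidableEq α] (G : SimpleGraph α) :
    ∀ C : Finset α, IsVC G C → ∃ C₀ ⊆ C, IsMinVC G C₀ := by
  intro C
  induction C using Finset.strongInduction with
  | _ C ih =>
    intro hC
    by_cases h : ∃ C' ⊂ C, IsVC G C'
    · obtain ⟨C', hsub, hC'⟩ := h
      obtain ⟨C₀, h1, h2⟩ := ih C' hsub hC'
      exact ⟨C₀, h1.trans hsub.subset, h2⟩
    · push_neg at h
      exact ⟨C, subset_rfl, hC, h⟩

lemma exists_min_rel {β : Type*} [DecidableEq β] (r : β → β → Prop)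
    (htrans : ∀ a b c, r a b → r b c → r a c) (hanti : ∀ a b, r a b → r b a → a = b) :
    ∀ s : Finset β, s.Nonempty → ∃ m ∈ s, ∀ x ∈ s, r x m → x = m := by
  classical
  intro s
  induction s using Finset.strongInduction with
  | _ s ih =>
    intro hne
    obtain ⟨a, ha⟩ := hne
    by_cases hte : (s.filter (fun x => r x a ∧ x ≠ a)).Nonempty
    · have htsub : s.filter (fun x => r x a ∧ x ≠ a) ⊂ s := by
        refine (Finset.ssubset_iff_of_subset (Finset.filter_subset _ _)).2 ⟨a, ha, ?_⟩
        simp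
      obtain ⟨m, hm, hmin⟩ := ih _ htsub hte
      rw [Finset.mem_filter] at hm
      refine ⟨m, hm.1, ?_⟩
      intro x hx hxm
      by_cases hxa : x = a
      · subst hxa
        exact absurd (hanti _ _ hm.2.1 hxm) hm.2.2
      · exact hmin x (Finset.mem_filter.2 ⟨hx, htrans _ _ _ hxm hm.2.1, hxa⟩) hxm
    · refine ⟨a, ha, fun x hx hxa => ?_⟩
      by_contra hne'
      exact hte ⟨x, Finset.mem_filter.2 ⟨hx, hxa, hne'⟩⟩

lemma chain_card {n : ℕ} (c : Fin (n + 1) → Finset (Fin n)) (hc : StrictMono c) :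
    ∀ k : Fin (n + 1), (c k).card = k.val := by
  have hlt : ∀ k l : Fin (n+1), k < l → (c k).card < (c l).card := fun k l h =>
    Finset.card_lt_card (Finset.lt_iff_ssubset.mp (hc h))
  have low : ∀ k : ℕ, ∀ hk : k ≤ n, k ≤ (c ⟨k, Nat.lt_succ_of_le hk⟩).card := by
    intro k
    induction k with
    | zero => intro _; exact Nat.zero_le _
    | succ k ih =>
      intro hk
      have h1 := ih (by omega)
      have h2 := hlt ⟨k, by omega⟩ ⟨k+1, by omega⟩ (by simp [Fin.lt_def])
      omega
  have high : ∀ k : ℕ, k ≤ n → (c ⟨n - k, by omega⟩).card ≤ n - k := by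
    intro k
    induction k with
    | zero =>
      intro _
      have := Finset.card_le_univ (c ⟨n - 0, by omega⟩)
      simpa using this
    | succ k ih =>
      intro hk
      have h1 := ih (by omega)
      have h2 := hlt ⟨n - (k+1), by omega⟩ ⟨n - k, by omega⟩ (by simp [Fin.lt_def]; omega)
      omega
  intro k
  have hk : k.val ≤ n := by omega
  have h1 := low k.val hk
  have h2 := high (n - k.val) (by omega)
  have e1 : (⟨k.val, Nat.lt_succ_of_le hk⟩ : Fin (n+1)) = k := by ext; rfl
  have e2 : (⟨n - (n - k.val), by omega⟩ : Fin (n+1)) = k := by ext; simp; omega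
  rw [e1] at h1
  rw [e2] at h2
  omega

theorem stmt14_fwd {n : ℕ} (L : Set (Finset (Fin n)))
    (G : SimpleGraph (Fin n ⊕ Fin n))     (hG : ∀ C : Finset (Fin n ⊕ Fin n), IsMinVC G C ↔ ∃ S ∈ L, C = coverOf S)
    (r : Fin n → Fin n → Prop) (hr : IsPartialOrder (Fin n) r)
    (hadj : ∀ u v, G.Adj u v ↔ ((∃ i j, r i j ∧ u = Sum.inl i ∧ v = Sum.inr j) ∨
        (∃ i j, r i j ∧ u = Sum.inr j ∧ v = Sum.inl i))) :
    (∃ c : Fin (n + 1) → Finset (Fin n), StrictMono c ∧ ∀ i, c i ∈ L) := by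
  classical
  haveI := hr
  have hE : ∀ i j, G.Adj (Sum.inl i) (Sum.inr j) ↔ r i j := by
    intro i j
    rw [hadj]
    simp
  have hdown : ∀ S : Finset (Fin n), (∀ a b, r a b → b ∈ S → a ∈ S) → S ∈ L := by
    intro S hS
    have hvc : IsVC G (coverOf S) := by
      intro u v huv
      rw [hadj] at huv
      rcases huv with ⟨a, b, hab, rfl, rfl⟩ | ⟨a, b, hab, rfl, rfl⟩
      · by_cases hb : b ∈ S
        · exact Or.inl (mem_coverOf_inl.2 (hS a b hab hb))
        · exact Or.inr (mem_coverOf_inr.2 hb)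
      · by_cases hb : b ∈ S
        · exact Or.inr (mem_coverOf_inl.2 (hS a b hab hb))
        · exact Or.inl (mem_coverOf_inr.2 hb)
    have hmin : IsMinVC G (coverOf S) := by
      refine ⟨hvc, ?_⟩
      intro C' hC' hvc'
      obtain ⟨v, hv, hv'⟩ := Finset.exists_of_ssubset hC'
      match v, hv, hv' with
      | Sum.inl a, hv, hv' =>
        have ha : a ∈ S := mem_coverOf_inl.1 hv
        have hadj' : G.Adj (Sum.inl a) (Sum.inr a) := (hE a a).2 (refl_of r a)
        rcases hvc' hadj' with h | h
        · exact hv' h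
        · exact (mem_coverOf_inr.1 (hC'.subset h)) ha
      | Sum.inr b, hv, hv' =>
        have hb : b ∉ S := mem_coverOf_inr.1 hv
        have hadj' : G.Adj (Sum.inl b) (Sum.inr b) := (hE b b).2 (refl_of r b)
        rcases hvc' hadj' with h | h
        · exact hb (mem_coverOf_inl.1 (hC'.subset h))
        · exact hv' h
    obtain ⟨T, hT, hTeq⟩ := (hG _).1 hmin
    rw [coverOf_inj hTeq]
    exact hT
  have step : ∀ S : Finset (Fin n), (∀ a b, r a b → b ∈ S → a ∈ S) → S.card < n →
      ∃ T, (∀ a b, r a b → b ∈ T → a ∈ T) ∧ S ⊆ T ∧ T.card = S.card + 1 := by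
    intro S hS hcard
    have hne : Sᶜ.Nonempty := by
      rw [← Finset.card_pos, Finset.card_compl]
      simp
      omega
    obtain ⟨m, hm, hmin⟩ := exists_min_rel r (fun a b c h1 h2 => _root_.trans_of r h1 h2)
      (fun a b h1 h2 => _root_.antisymm_of r h1 h2) Sᶜ hne
    refine ⟨insert m S, ?_, Finset.subset_insert _ _, ?_⟩
    · intro a b hab hb
      rcases Finset.mem_insert.1 hb with rfl | hb
      · by_cases haS : a ∈ S
        · exact Finset.mem_insert_of_mem haS
        · rw [hmin a (Finset.mem_compl.2 haS) hab]
          exact Finset.mem_insert_self _ _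
      · exact Finset.mem_insert_of_mem (hS a b hab hb)
    · rw [Finset.card_insert_of_notMem (Finset.mem_compl.1 hm)]
  choose! g hg1 hg2 hg3 using step
  set F : Finset (Fin n) → Finset (Fin n) := fun T => if T.card < n then g T else T with hF
  set f : ℕ → Finset (Fin n) := fun k => F^[k] ∅ with hf
  have hstep : ∀ k, (∀ a b, r a b → b ∈ f k → a ∈ f k) → (f k).card < n →
      f (k+1) = g (f k) := by
    intro k hd hcc
    show F^[k+1] ∅ = _
    rw [Function.iterate_succ_apply']
    show F (f k) = _
    rw [hF]
    simp only
    rw [if_pos hcc]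
  have inv : ∀ k, k ≤ n → (∀ a b, r a b → b ∈ f k → a ∈ f k) ∧ (f k).card = k := by
    intro k
    induction k with
    | zero =>
      intro _
      have h0 : f 0 = ∅ := rfl
      rw [h0]
      exact ⟨fun a b _ h => absurd h (Finset.notMem_empty _), Finset.card_empty⟩
    | succ k ih =>
      intro hk
      obtain ⟨hd, hcc⟩ := ih (by omega)
      have hlt : (f k).card < n := by omega
      rw [hstep k hd hlt]
      exact ⟨hg1 _ hd hlt, by rw [hg3 _ hd hlt, hcc]⟩
  have hsub : ∀ k, k ≤ n → ∀ l, l ≤ k → f l ⊆ f k := by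
    intro k
    induction k with
    | zero =>
      intro _ l hl
      have : l = 0 := by omega
      rw [this]
    | succ k ih =>
      intro hk l hl
      rcases Nat.lt_or_ge l (k+1) with h | h
      · obtain ⟨hd, hcc⟩ := inv k (by omega)
        have hlt : (f k).card < n := by omega
        refine (ih (by omega) l (by omega)).trans ?_
        rw [hstep k hd hlt]
        exact hg2 _ hd hlt
      · have : l = k + 1 := by omega
        rw [this]
  refine ⟨fun i => f i.val, ?_, ?_⟩
  · intro i j hij
    have hij' : i.val < j.val := hij
    have hsub' : f i.val ⊆ f j.val := hsub j.val (by omega) i.val (by omega)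
    have hcards : (f i.val).card < (f j.val).card := by
      rw [(inv i.val (by omega)).2, (inv j.val (by omega)).2]
      exact hij'
    exact lt_of_le_of_ne (Finset.le_iff_subset.2 hsub')
      (fun h => by rw [show f i.val = f j.val from h] at hcards; omega)
  · intro i
    exact hdown _ (inv i.val (by omega)).1

theorem stmt14_bwd {n : ℕ} (L : Set (Finset (Fin n)))
    (G : SimpleGraph (Fin n ⊕ Fin n)) (hbip : Bip G)
    (hG : ∀ C : Finset (Fin n ⊕ Fin n), IsMinVC G C ↔ ∃ S ∈ L, C = coverOf S)
    (c : Fin (n + 1) → Finset (Fin n)) (hc : StrictMono c) (hcL : ∀ i, c i ∈ L) :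
    (∃ r : Fin n → Fin n → Prop, IsPartialOrder (Fin n) r ∧
      ∀ u v, G.Adj u v ↔ ((∃ i j, r i j ∧ u = Sum.inl i ∧ v = Sum.inr j) ∨
        (∃ i j, r i j ∧ u = Sum.inr j ∧ v = Sum.inl i))) := by
  classical
  have hcard := chain_card c hc
  set E : Fin n → Fin n → Prop := fun i j => G.Adj (Sum.inl i) (Sum.inr j) with hEdef
  have hLvc : ∀ S ∈ L, ∀ a b, E a b → b ∈ S → a ∈ S := by
    intro S hS a b hab hb
    have hmin : IsMinVC G (coverOf S) := (hG _).2 ⟨S, hS, rfl⟩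
    rcases hmin.1 hab with h | h
    · exact mem_coverOf_inl.1 h
    · exact absurd hb (mem_coverOf_inr.1 h)
  have htopc : c (Fin.last n) = Finset.univ :=
    Finset.eq_univ_of_card _ (by rw [hcard]; simp)
  have hex : ∀ i : Fin n, ∃ k : ℕ, ∃ h : k < n + 1, i ∈ c ⟨k, h⟩ := by
    intro i
    refine ⟨n, by omega, ?_⟩
    rw [show (⟨n, by omega⟩ : Fin (n+1)) = Fin.last n from rfl, htopc]
    exact Finset.mem_univ _
  set ρ : Fin n → ℕ := fun i => Nat.find (hex i) with hρdef
  have hρn : ∀ i, ρ i ≤ n := by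
    intro i
    obtain ⟨h, _⟩ := Nat.find_spec (hex i)
    exact Nat.lt_succ_iff.mp h
  have hρmem : ∀ i, ∀ h : ρ i < n + 1, i ∈ c ⟨ρ i, h⟩ := by
    intro i h
    obtain ⟨h', hm⟩ := Nat.find_spec (hex i)
    exact hm
  have hρpos : ∀ i, 0 < ρ i := by
    intro i
    rcases Nat.eq_zero_or_pos (ρ i) with h | h
    · exfalso
      have hm := hρmem i (by omega)
      have h0 : c ⟨ρ i, by omega⟩ = ∅ := by
        apply Finset.card_eq_zero.1
        rw [hcard]
        exact h
      rw [h0] at hm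
      exact Finset.notMem_empty _ hm
    · exact h
  have hρnotmem : ∀ i, ∀ h : ρ i - 1 < n + 1, i ∉ c ⟨ρ i - 1, h⟩ := by
    intro i h hmem
    exact Nat.find_min (hex i) (show ρ i - 1 < ρ i by have := hρpos i; omega) ⟨h, hmem⟩
  have hEc : ∀ a b, E a b → ∀ k : Fin (n+1), b ∈ c k → a ∈ c k :=
    fun a b hab k hb => hLvc _ (hcL k) a b hab hb
  have hρmono : ∀ a b, E a b → ρ a ≤ ρ b := by
    intro a b hab
    have hb := hρmem b (by have := hρn b; omega)
    exact Nat.find_le ⟨by have := hρn b; omega, hEc a b hab _ hb⟩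
  have hρinj : ∀ a b, ρ a = ρ b → a = b := by
    intro a b hab
    by_contra hne
    have hk : ρ a ≤ n := hρn a
    have h1 : a ∈ c ⟨ρ a, by omega⟩ := hρmem a _
    have h2 : b ∈ c ⟨ρ a, by omega⟩ := by
      have := hρmem b (by omega)
      rw [show (⟨ρ b, by omega⟩ : Fin (n+1)) = ⟨ρ a, by omega⟩ from by simp only [Fin.mk.injEq]; omega] at this
      exact this
    have h3 : a ∉ c ⟨ρ a - 1, by omega⟩ := hρnotmem a _
    have h4 : b ∉ c ⟨ρ a - 1, by omega⟩ := by
      have := hρnotmem b (by omega)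
      rw [show (⟨ρ b - 1, by omega⟩ : Fin (n+1)) = ⟨ρ a - 1, by omega⟩ from by simp only [Fin.mk.injEq]; omega] at this
      exact this
    have hmono : c ⟨ρ a - 1, by omega⟩ ⊆ c ⟨ρ a, by omega⟩ := by
      apply hc.monotone
      simp [Fin.le_def]
    have hsub : insert a (insert b (c ⟨ρ a - 1, by omega⟩)) ⊆ c ⟨ρ a, by omega⟩ := by
      intro x hx
      rcases Finset.mem_insert.1 hx with rfl | hx
      · exact h1
      rcases Finset.mem_insert.1 hx with rfl | hx
      · exact h2
      · exact hmono hx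
    have h5 := Finset.card_le_card hsub
    rw [Finset.card_insert_of_notMem (by
        intro hmem
        rcases Finset.mem_insert.1 hmem with h | h
        · exact hne h
        · exact h3 h),
      Finset.card_insert_of_notMem h4, hcard, hcard] at h5
    simp at h5
    have := hρpos a
    omega
  have hrefl : ∀ i, E i i := by
    intro i
    have hk : ρ i ≤ n := hρn i
    have hmin : IsMinVC G (coverOf (c ⟨ρ i, by omega⟩)) := (hG _).2 ⟨_, hcL _, rfl⟩
    have hCi : Sum.inl i ∈ coverOf (c ⟨ρ i, by omega⟩) := mem_coverOf_inl.2 (hρmem i _)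
    have hss : coverOf (c ⟨ρ i, by omega⟩) \ {Sum.inl i} ⊂ coverOf (c ⟨ρ i, by omega⟩) :=
      Finset.sdiff_ssubset (Finset.singleton_subset_iff.2 hCi) (Finset.singleton_nonempty _)
    have hnvc := hmin.2 _ hss
    rw [IsVC] at hnvc
    push_neg at hnvc
    obtain ⟨u, v, huv, hu, hv⟩ := hnvc
    obtain ⟨b, hEb, hbmem⟩ : ∃ b, E i b ∧
        Sum.inr b ∉ coverOf (c ⟨ρ i, by omega⟩) \ {Sum.inl i} := by
      rcases hmin.1 huv with h | h
      · have hui : u = Sum.inl i := by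
          by_contra hne
          exact hu (Finset.mem_sdiff.2 ⟨h, by simpa using hne⟩)
        subst hui
        match v, huv, hv with
        | Sum.inl a, huv, hv => exact absurd huv (hbip.1 _ _)
        | Sum.inr b, huv, hv => exact ⟨b, huv, hv⟩
      · have hvi : v = Sum.inl i := by
          by_contra hne
          exact hv (Finset.mem_sdiff.2 ⟨h, by simpa using hne⟩)
        subst hvi
        match u, huv, hu with
        | Sum.inl a, huv, hu => exact absurd huv (hbip.1 _ _)
        | Sum.inr b, huv, hu => exact ⟨b, huv.symm, hu⟩
    have hbS : b ∈ c ⟨ρ i, by omega⟩ := by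
      by_contra hb
      exact hbmem (Finset.mem_sdiff.2 ⟨mem_coverOf_inr.2 hb, by simp⟩)
    have h1 : ρ b ≤ ρ i := Nat.find_le ⟨by omega, hbS⟩
    have h2 : ρ i ≤ ρ b := hρmono i b hEb
    have hib := hρinj i b (by omega)
    rw [hib] at hEb ⊢
    exact hEb
  have htrans : ∀ i j k, E i j → E j k → E i k := by
    intro i j k hij hjk
    by_contra hik
    set C : Finset (Fin n ⊕ Fin n) := ((Finset.univ.filter (· ≠ i)).image Sum.inl) ∪
      ((Finset.univ.filter fun b => E i b).image Sum.inr) with hCdef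
    have hCvc : IsVC G C := by
      intro u v huv
      match u, v, huv with
      | Sum.inl a, Sum.inl b, huv => exact absurd huv (hbip.1 _ _)
      | Sum.inr a, Sum.inr b, huv => exact absurd huv (hbip.2 _ _)
      | Sum.inl a, Sum.inr b, huv =>
        by_cases ha : a = i
        · subst ha
          refine Or.inr ?_
          rw [hCdef]
          simp only [Finset.mem_union, Finset.mem_image, Finset.mem_filter]
          exact Or.inr ⟨b, ⟨Finset.mem_univ _, huv⟩, rfl⟩
        · refine Or.inl ?_
          rw [hCdef]
          simp only [Finset.mem_union, Finset.mem_image, Finset.mem_filter]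
          exact Or.inl ⟨a, ⟨Finset.mem_univ _, ha⟩, rfl⟩
      | Sum.inr b, Sum.inl a, huv =>
        by_cases ha : a = i
        · subst ha
          refine Or.inl ?_
          rw [hCdef]
          simp only [Finset.mem_union, Finset.mem_image, Finset.mem_filter]
          exact Or.inr ⟨b, ⟨Finset.mem_univ _, huv.symm⟩, rfl⟩
        · refine Or.inr ?_
          rw [hCdef]
          simp only [Finset.mem_union, Finset.mem_image, Finset.mem_filter]
          exact Or.inl ⟨a, ⟨Finset.mem_univ _, ha⟩, rfl⟩
    obtain ⟨C₀, hC₀sub, hC₀⟩ := exists_minVC G C hCvc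
    obtain ⟨S, hS, hSeq⟩ := (hG _).1 hC₀
    rw [hSeq] at hC₀sub hC₀
    have hiS : i ∉ S := by
      intro h
      have hmem : Sum.inl i ∈ C := hC₀sub (mem_coverOf_inl.2 h)
      rw [hCdef] at hmem
      simp at hmem
    have hkS : k ∈ S := by
      by_contra h
      have hmem : Sum.inr k ∈ C := hC₀sub (mem_coverOf_inr.2 h)
      rw [hCdef] at hmem
      simp at hmem
      exact hik hmem
    have hjS : j ∈ S := hLvc S hS j k hjk hkS
    rcases hC₀.1 hij with h | h
    · exact hiS (mem_coverOf_inl.1 h)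
    · exact (mem_coverOf_inr.1 h) hjS
  have hanti : ∀ a b, E a b → E b a → a = b := fun a b h1 h2 =>
    hρinj a b (Nat.le_antisymm (hρmono a b h1) (hρmono b a h2))
  refine ⟨E, { refl := hrefl, trans := htrans, antisymm := hanti }, ?_⟩
  intro u v
  constructor
  · intro huv
    match u, v, huv with
    | Sum.inl a, Sum.inl b, huv => exact absurd huv (hbip.1 _ _)
    | Sum.inr a, Sum.inr b, huv => exact absurd huv (hbip.2 _ _)
    | Sum.inl a, Sum.inr b, huv => exact Or.inl ⟨a, b, huv, rfl, rfl⟩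
    | Sum.inr b, Sum.inl a, huv => exact Or.inr ⟨a, b, huv.symm, rfl, rfl⟩
  · rintro (⟨a, b, hab, rfl, rfl⟩ | ⟨a, b, hab, rfl, rfl⟩)
    · exact hab
    · exact hab.symm

/-- the unmixed bipartite graph `G(L)` attached to a sublattice `L` of
the Boolean lattice is Cohen–Macaulay — i.e. (by the Herzog–Hibi characterization)
of the form `G_P` for a partial order on `[n]` — if and only if `L` is full. -/
theorem stmt_14 {n : ℕ} (L : Set (Finset (Fin n)))
    (hbot : (∅ : Finset (Fin n)) ∈ L) (htop : (Finset.univ : Finset (Fin n)) ∈ L)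
    (hlat : ∀ S ∈ L, ∀ T ∈ L, S ∪ T ∈ L ∧ S ∩ T ∈ L)
    (G : SimpleGraph (Fin n ⊕ Fin n)) (hbip : Bip G) (hunm : Unmixed G)
    (hG : ∀ C : Finset (Fin n ⊕ Fin n), IsMinVC G C ↔ ∃ S ∈ L, C = coverOf S) :
    (∃ r : Fin n → Fin n → Prop, IsPartialOrder (Fin n) r ∧
      ∀ u v, G.Adj u v ↔ ((∃ i j, r i j ∧ u = Sum.inl i ∧ v = Sum.inr j) ∨
        (∃ i j, r i j ∧ u = Sum.inr j ∧ v = Sum.inl i))) ↔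
    (∃ c : Fin (n + 1) → Finset (Fin n), StrictMono c ∧ ∀ i, c i ∈ L) := by
  constructor
  · rintro ⟨r, hr, hadj⟩
    exact stmt14_fwd L G hG r hr hadj
  · rintro ⟨c, hc, hcL⟩
    exact stmt14_bwd L G hbip hG c hc hcL
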